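/- If an n×n block-partitioned real matrix A is robustly block D-stable and α ⊊ {1,…,N} is a nonempty proper index set with complement ᾱ, then the block principal submatrix A_{α,α} is invertible and the Schur complement A/A_{α,α} := A_{ᾱ,ᾱ} − A_{ᾱ,α} A_{α,α}⁻¹ A_{α,ᾱ} is robustly block D-stable with respect to the induced block partition (n_i)_{i∈ᾱ}. -/

import Mathlib

open Matrix

/-- A square real matrix is Hurwitz if every eigenvalue of it, viewed as a complex
matrix, has strictly negative real part. -/
def IsHurwitz {m : Type*} [Fintype m] [DecidableEq m] (M : Matrix m m ℝ) : Prop :=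
  ∀ μ ∈ spectrum ℂ (M.map (algebraMap ℝ ℂ)), μ.re < 0

/-- The operator 2-norm of a square real matrix. -/
noncomputable def opNorm2 {m : Type*} [Fintype m] [DecidableEq m] (M : Matrix m m ℝ) : ℝ :=
  ‖Matrix.toEuclideanCLM (𝕜 := ℝ) M‖

/-- A block-partitioned square real matrix (blocks indexed by `ι`, the `i`-th block of
size `n i`) is block D-stable if `D * A` is Hurwitz for every positive block-diagonal
scaling `D = blkdiag (d 1 • I, …, d N • I)`. -/
def BlockDStable {ι : Type*} [Fintype ι] [DecidableEq ι] {n : ι → ℕ}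
    (A : Matrix ((i : ι) × Fin (n i)) ((i : ι) × Fin (n i)) ℝ) : Prop :=
  ∀ d : ι → ℝ, (∀ i, 0 < d i) →
    IsHurwitz (Matrix.diagonal (fun p => d p.1) * A)

/-- A block-partitioned square real matrix is robustly block D-stable if all
sufficiently small (in operator 2-norm) perturbations of it are block D-stable. -/
def RobustBlockDStable {ι : Type*} [Fintype ι] [DecidableEq ι] {n : ι → ℕ}
    (A : Matrix ((i : ι) × Fin (n i)) ((i : ι) × Fin (n i)) ℝ) : Prop :=
  ∃ μ > 0, ∀ B : Matrix ((i : ι) × Fin (n i)) ((i : ι) × Fin (n i)) ℝ,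
    opNorm2 B ≤ μ → BlockDStable (A + B)

set_option linter.unusedSectionVars false
open Polynomial

noncomputable def Complex.abs : AbsoluteValue ℂ ℝ := IsAbsoluteValue.toAbsoluteValue (norm : ℂ → ℝ)

lemma Complex.continuous_abs : Continuous Complex.abs := continuous_norm

variable {m : Type*} [Fintype m] [DecidableEq m]

lemma det_smul_one_sub_eq_eval (M : Matrix m m ℂ) (z : ℂ) :
    (z • (1 : Matrix m m ℂ) - M).det = M.charpoly.eval z := by
  rw [Matrix.charpoly, ← coe_evalRingHom, RingHom.map_det]
  congr 1
  ext i j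
  by_cases h : i = j <;>
    simp [charmatrix_apply, Matrix.one_apply, Matrix.diagonal_apply, h,
      Matrix.smul_apply, Matrix.sub_apply]

lemma mem_spectrum_iff_det' (M : Matrix m m ℂ) (z : ℂ) :
    z ∈ spectrum ℂ M ↔ (z • (1 : Matrix m m ℂ) - M).det = 0 := by
  rw [spectrum.mem_iff, Algebra.algebraMap_eq_smul_one, Matrix.isUnit_iff_isUnit_det,
    isUnit_iff_ne_zero, not_not]

lemma multiset_prod_bound (z : ℂ) (g : ℂ → ℝ) (hg0 : ∀ w, 0 ≤ g w) (s : Multiset ℂ)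
    (hg : ∀ w ∈ s, g w ≤ Complex.abs (z - w)) :
    (s.map g).prod ≤ Complex.abs ((s.map (fun w => z - w)).prod) := by
  induction s using Multiset.induction_on with
  | empty => simp
  | cons a t ih =>
    simp only [Multiset.map_cons, Multiset.prod_cons, _root_.map_mul]
    have h1 : g a ≤ Complex.abs (z - a) := hg a (Multiset.mem_cons_self a t)
    have h2 := ih (fun w hw => hg w (Multiset.mem_cons_of_mem hw))
    have h3 : (0:ℝ) ≤ (t.map g).prod := Multiset.prod_nonneg (by
      intro x hx; obtain ⟨w, _, rfl⟩ := Multiset.mem_map.mp hx; exact hg0 w)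
    exact mul_le_mul h1 h2 h3 (Complex.abs.nonneg _)

lemma charpoly_roots_spec (M : Matrix m m ℂ) (w : ℂ) (hw : w ∈ M.charpoly.roots) :
    w ∈ spectrum ℂ M := by
  rw [mem_roots (M.charpoly_monic.ne_zero)] at hw
  rw [mem_spectrum_iff_det', det_smul_one_sub_eq_eval]
  exact hw

lemma abs_det_ge_of_bound (M : Matrix m m ℂ) (z : ℂ) (g : ℂ → ℝ) (hg0 : ∀ w, 0 ≤ g w)
    (hg : ∀ w ∈ spectrum ℂ M, g w ≤ Complex.abs (z - w)) :
    (M.charpoly.roots.map g).prod ≤ Complex.abs ((z • (1 : Matrix m m ℂ) - M).det) := by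
  rw [det_smul_one_sub_eq_eval]
  have hsp : M.charpoly = (M.charpoly.roots.map (fun a => X - C a)).prod :=
    ((IsAlgClosed.splits _).eq_prod_roots_of_monic
      M.charpoly_monic).trans (by simp)
  calc (M.charpoly.roots.map g).prod
      ≤ Complex.abs ((M.charpoly.roots.map (fun w => z - w)).prod) :=
        multiset_prod_bound z g hg0 _ (fun w hw => hg w (charpoly_roots_spec M w hw))
    _ = Complex.abs (M.charpoly.eval z) := by
        conv_rhs => rw [hsp]
        rw [eval_multiset_prod]
        congr 2
        rw [Multiset.map_map]
        congr 1
        ext w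
        simp

lemma card_roots_charpoly (M : Matrix m m ℂ) :
    Multiset.card M.charpoly.roots = Fintype.card m := by
  have h := (splits_iff_card_roots (f := M.charpoly)).mp (IsAlgClosed.splits _)
  rw [h, charpoly_natDegree_eq_dim]

lemma bound_const (M : Matrix m m ℂ) (hM : ∀ w ∈ spectrum ℂ M, w.re < 0) (z : ℂ)
    (hz : 0 < z.re) :
    z.re ^ (Fintype.card m) ≤ Complex.abs ((z • (1 : Matrix m m ℂ) - M).det) := by
  have := abs_det_ge_of_bound M z (fun _ => z.re) (fun _ => hz.le) (fun w hw => by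
    have h1 : (z - w).re ≤ Complex.abs (z - w) := Complex.re_le_norm _
    have h2 : z.re ≤ (z - w).re := by
      simp only [Complex.sub_re]
      nlinarith [hM w hw]
    linarith)
  rwa [Multiset.map_const', Multiset.prod_replicate, card_roots_charpoly] at this

lemma pointwise_c_bound (z w : ℂ) (hz : 0 < z.re) (hw : w.re ≤ 0) :
    min (1/2) (z.re / (2 * Complex.abs z)) * Complex.abs w ≤ Complex.abs (z - w) := by
  have hz0 : z ≠ 0 := fun h => by simp [h] at hz
  have habs : 0 < Complex.abs z := Complex.abs.pos hz0
  rcases le_or_gt (Complex.abs w) (2 * Complex.abs z) with h | h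
  · have h1 : min (1/2) (z.re / (2 * Complex.abs z)) * Complex.abs w
        ≤ (z.re / (2 * Complex.abs z)) * (2 * Complex.abs z) := by
      exact mul_le_mul (min_le_right _ _) h (Complex.abs.nonneg _)
        (div_nonneg hz.le (by positivity))
    have h2 : (z.re / (2 * Complex.abs z)) * (2 * Complex.abs z) = z.re := by
      field_simp
    have h3 : z.re ≤ (z - w).re := by simp only [Complex.sub_re]; linarith
    have h4 : (z - w).re ≤ Complex.abs (z - w) := Complex.re_le_norm _
    linarith
  · have h1 : Complex.abs w - Complex.abs z ≤ Complex.abs (z - w) := by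
      have h2 : Complex.abs (w - z) = Complex.abs (z - w) := by
        rw [← Complex.abs.map_neg, neg_sub]
      have h3 := abs_sub_abs_le_abs_sub (Complex.abs w) (Complex.abs z)
      have h4 : |Complex.abs w - Complex.abs z| ≥  Complex.abs w - Complex.abs z := le_abs_self _
      have h5 := Complex.abs.abs_abv_sub_le_abv_sub w z
      linarith
    have h2 : min (1/2) (z.re / (2 * Complex.abs z)) * Complex.abs w
        ≤ (1/2) * Complex.abs w := by
      apply mul_le_mul_of_nonneg_right (min_le_left _ _) (Complex.abs.nonneg _)
    linarith

lemma bound_det (M : Matrix m m ℂ) (hM : ∀ w ∈ spectrum ℂ M, w.re < 0) (z : ℂ)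
    (hz : 0 < z.re) :
    min (1/2) (z.re / (2 * Complex.abs z)) ^ (Fintype.card m) * Complex.abs M.det
      ≤ Complex.abs ((z • (1 : Matrix m m ℂ) - M).det) := by
  set c := min (1/2) (z.re / (2 * Complex.abs z)) with hc
  have hzabs : 0 < Complex.abs z :=
    Complex.abs.pos (fun h => by simp [h] at hz)
  have hc0 : 0 ≤ c :=
    le_min (by norm_num) (div_nonneg hz.le (by positivity))
  have := abs_det_ge_of_bound M z (fun w => c * Complex.abs w)
    (fun w => by positivity)
    (fun w hw => pointwise_c_bound z w hz ((hM w hw).le))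
  calc c ^ (Fintype.card m) * Complex.abs M.det
      = (M.charpoly.roots.map (fun w => c * Complex.abs w)).prod := by
        rw [Matrix.det_eq_prod_roots_charpoly]
        have e1 : (M.charpoly.roots.map (fun w => c * Complex.abs w)).prod
            = (M.charpoly.roots.map (fun _ => c)).prod *
              (M.charpoly.roots.map (fun w => Complex.abs w)).prod :=
          Multiset.prod_map_mul
        rw [e1, Multiset.map_const', Multiset.prod_replicate, card_roots_charpoly]
        congr 1
        exact _root_.map_multiset_prod Complex.abs M.charpoly.roots
    _ ≤ _ := this

variable {m : Type*} [Fintype m] [DecidableEq m]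

lemma euclid_coord_le_norm (x : EuclideanSpace ℝ m) (i : m) : |x i| ≤ ‖x‖ := by
  have h := abs_real_inner_le_norm (EuclideanSpace.single i (1:ℝ)) x
  rw [EuclideanSpace.norm_single] at h
  simpa [real_inner_comm, EuclideanSpace.inner_single_right] using h

lemma euclid_norm_le_sum (x : EuclideanSpace ℝ m) : ‖x‖ ≤ ∑ i, |x i| := by
  rw [EuclideanSpace.norm_eq]
  have h1 : ∑ i, ‖x i‖ ^ 2 ≤ (∑ i, ‖x i‖) ^ 2 :=
    Finset.sum_sq_le_sq_sum_of_nonneg (fun i _ => norm_nonneg _)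
  calc Real.sqrt (∑ i, ‖x i‖ ^ 2) ≤ Real.sqrt ((∑ i, ‖x i‖) ^ 2) := Real.sqrt_le_sqrt h1
    _ = ∑ i, ‖x i‖ := Real.sqrt_sq (Finset.sum_nonneg fun i _ => norm_nonneg _)
    _ = ∑ i, |x i| := by simp [Real.norm_eq_abs]

lemma toEuclideanCLM_coord (M : Matrix m m ℝ) (x : EuclideanSpace ℝ m) (i : m) :
    (Matrix.toEuclideanCLM (𝕜 := ℝ) M x) i = ∑ j, M i j * x j := by
  have h := Matrix.ofLp_toEuclideanCLM (𝕜 := ℝ) M x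
  have h2 : WithLp.ofLp (Matrix.toEuclideanCLM (𝕜 := ℝ) M x) i
      = M.mulVec (WithLp.ofLp x) i := by rw [h]
  simpa [Matrix.mulVec, dotProduct] using h2

lemma entry_le_opNorm2 (M : Matrix m m ℝ) (i j : m) : |M i j| ≤ opNorm2 M := by
  have h := (Matrix.toEuclideanCLM (𝕜 := ℝ) M).le_opNorm (EuclideanSpace.single j 1)
  rw [EuclideanSpace.norm_single, norm_one, mul_one] at h
  have h2 := euclid_coord_le_norm (Matrix.toEuclideanCLM (𝕜 := ℝ) M (EuclideanSpace.single j 1)) i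
  rw [toEuclideanCLM_coord] at h2
  have h3 : ∑ k, M i k * (EuclideanSpace.single j (1:ℝ)) k = M i j := by
    simp [EuclideanSpace.single_apply]
  rw [h3] at h2
  exact h2.trans h

lemma opNorm2_le_sum_abs (M : Matrix m m ℝ) : opNorm2 M ≤ ∑ i, ∑ j, |M i j| := by
  apply ContinuousLinearMap.opNorm_le_bound _
    (Finset.sum_nonneg fun i _ => Finset.sum_nonneg fun j _ => abs_nonneg _)
  intro x
  calc ‖Matrix.toEuclideanCLM (𝕜 := ℝ) M x‖
      ≤ ∑ i, |(Matrix.toEuclideanCLM (𝕜 := ℝ) M x) i| := euclid_norm_le_sum _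
    _ ≤ ∑ i, (∑ j, |M i j|) * ‖x‖ := by
        apply Finset.sum_le_sum
        intro i _
        rw [toEuclideanCLM_coord, Finset.sum_mul]
        calc |∑ j, M i j * x j| ≤ ∑ j, |M i j * x j| := Finset.abs_sum_le_sum_abs _ _
          _ ≤ ∑ j, |M i j| * ‖x‖ := by
              apply Finset.sum_le_sum
              intro j _
              rw [abs_mul]
              exact mul_le_mul_of_nonneg_left (euclid_coord_le_norm x j) (abs_nonneg _)
    _ = (∑ i, ∑ j, |M i j|) * ‖x‖ := by rw [Finset.sum_mul]


variable {N : ℕ} {n : Fin N → ℕ}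

def splitEquiv (α : Finset (Fin N)) :
    ((i : {x : Fin N // x ∈ α}) × Fin (n i.1)) ⊕ ((i : {x : Fin N // x ∉ α}) × Fin (n i.1))
      ≃ ((i : Fin N) × Fin (n i)) where
  toFun q := Sum.elim (fun p => ⟨p.1.1, p.2⟩) (fun p => ⟨p.1.1, p.2⟩) q
  invFun p := if h : p.1 ∈ α then Sum.inl ⟨⟨p.1, h⟩, p.2⟩ else Sum.inr ⟨⟨p.1, h⟩, p.2⟩
  left_inv q := by
    rcases q with p | p
    · simp [p.1.2]
    · simp [p.1.2]
  right_inv p := by by_cases h : p.1 ∈ α <;> simp [h]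

lemma submatrix_splitEquiv_eq_fromBlocks {R : Type*} (α : Finset (Fin N))
    (M : Matrix ((i : Fin N) × Fin (n i)) ((i : Fin N) × Fin (n i)) R) :
    M.submatrix (splitEquiv α) (splitEquiv α) =
      fromBlocks (fun p q => M ⟨p.1.1, p.2⟩ ⟨q.1.1, q.2⟩) (fun p q => M ⟨p.1.1, p.2⟩ ⟨q.1.1, q.2⟩)
        (fun p q => M ⟨p.1.1, p.2⟩ ⟨q.1.1, q.2⟩) (fun p q => M ⟨p.1.1, p.2⟩ ⟨q.1.1, q.2⟩) := by
  ext p q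
  rcases p with p | p <;> rcases q with q | q <;> rfl


lemma isHurwitz_det_ne_zero {m : Type*} [Fintype m] [DecidableEq m]
    (M : Matrix m m ℝ) (h : IsHurwitz M) : M.det ≠ 0 := by
  intro h0
  have hd : (M.map (algebraMap ℝ ℂ)).det = 0 := by
    rw [show (M.map ⇑(algebraMap ℝ ℂ)) = (algebraMap ℝ ℂ).mapMatrix M from rfl, ← RingHom.map_det, h0, map_zero]
  have h2 : (0:ℂ) ∈ spectrum ℂ (M.map (algebraMap ℝ ℂ)) := by
    rw [mem_spectrum_iff_det', zero_smul, zero_sub, det_neg, hd, mul_zero]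
  simpa using h 0 h2

abbrev ItT (N : ℕ) (n : Fin N → ℕ) := (i : Fin N) × Fin (n i)
abbrev JtT (N : ℕ) (n : Fin N → ℕ) (α : Finset (Fin N)) :=
  (i : {x : Fin N // x ∈ α}) × Fin (n i.1)
abbrev KtT (N : ℕ) (n : Fin N → ℕ) (α : Finset (Fin N)) :=
  (i : {x : Fin N // x ∉ α}) × Fin (n i.1)

variable {N : ℕ} {n : Fin N → ℕ}

lemma inj_J (α : Finset (Fin N)) :
    Function.Injective (fun p : JtT N n α => (⟨p.1.1, p.2⟩ : ItT N n)) :=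
  fun p q h => Sum.inl_injective ((splitEquiv α).injective (a₁ := Sum.inl p) (a₂ := Sum.inl q) h)

lemma inj_K (α : Finset (Fin N)) :
    Function.Injective (fun p : KtT N n α => (⟨p.1.1, p.2⟩ : ItT N n)) :=
  fun p q h => Sum.inr_injective ((splitEquiv α).injective (a₁ := Sum.inr p) (a₂ := Sum.inr q) h)

lemma engineA (α : Finset (Fin N)) (A' : Matrix (ItT N n) (ItT N n) ℝ)
    (h : BlockDStable A') (z0 : ℂ) (hz : 0 < z0.re) :
    (z0 • (1 : Matrix (JtT N n α) (JtT N n α) ℂ) -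
      (Matrix.map (fun p q => A' ⟨p.1.1, p.2⟩ ⟨q.1.1, q.2⟩ :
        Matrix (JtT N n α) (JtT N n α) ℝ) (algebraMap ℝ ℂ))).det
      ≠ 0 := by
  set Ac := A'.map (algebraMap ℝ ℂ) with hAc
  set F : ℝ → Matrix (ItT N n) (ItT N n) ℂ := fun ε =>
    z0 • 1 - (Matrix.diagonal (fun p : ItT N n => if p.1 ∈ α then (1:ℂ) else (ε:ℂ))) * Ac with hF
  set f : ℝ → ℂ := fun ε => (F ε).det with hf
  -- continuity
  have hdiag : Continuous (fun ε : ℝ =>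
      Matrix.diagonal (fun p : ItT N n => if p.1 ∈ α then (1:ℂ) else (ε:ℂ))) := by
    apply Continuous.matrix_diagonal
    apply continuous_pi
    intro p
    by_cases hp : p.1 ∈ α
    · simpa [hp] using (continuous_const : Continuous fun _ : ℝ => (1:ℂ))
    · simpa [hp] using Complex.continuous_ofReal
  have hcont : Continuous f :=
    Continuous.matrix_det (Continuous.sub continuous_const
      (Continuous.matrix_mul hdiag continuous_const))
  -- lower bound on positive ε
  have hbound : ∀ ε : ℝ, ε ∈ Set.Ioi (0:ℝ) →
      z0.re ^ (Fintype.card (ItT N n)) ≤ Complex.abs (f ε) := by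
    intro ε hε
    rw [Set.mem_Ioi] at hε
    have hd : ∀ i : Fin N, 0 < (if i ∈ α then (1:ℝ) else ε) := by
      intro i; by_cases hi : i ∈ α <;> simp [hi, hε]
    have hH := h _ hd
    have hFe : F ε = z0 • 1 -
        ((Matrix.diagonal (fun p : ItT N n => if p.1 ∈ α then (1:ℝ) else ε) * A').map
          (algebraMap ℝ ℂ)) := by
      ext p q
      by_cases hp : p.1 ∈ α <;>
        simp [hF, hAc, Matrix.sub_apply, Matrix.smul_apply, Matrix.diagonal_mul,
          Matrix.map_apply, hp]
    have := bound_const _ hH z0 hz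
    rw [hf]
    simp only [hFe]
    exact this
  have htend : Filter.Tendsto f (nhdsWithin 0 (Set.Ioi 0)) (nhds (f 0)) :=
    (hcont.tendsto 0).mono_left nhdsWithin_le_nhds
  have habs : z0.re ^ (Fintype.card (ItT N n)) ≤ Complex.abs (f 0) :=
    ge_of_tendsto ((Complex.continuous_abs.tendsto _).comp htend)
      (Filter.eventually_of_mem self_mem_nhdsWithin hbound)
  have hf0ne : f 0 ≠ 0 := by
    intro h0
    rw [h0] at habs
    simp only [map_zero] at habs
    exact absurd habs (not_le.mpr (pow_pos hz _))
  -- compute f 0 via blocks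
  have hsub : (F 0).submatrix (splitEquiv α) (splitEquiv α) =
      Matrix.fromBlocks
        (z0 • (1 : Matrix (JtT N n α) (JtT N n α) ℂ) -
          (Matrix.map (fun p q => A' ⟨p.1.1, p.2⟩ ⟨q.1.1, q.2⟩ :
            Matrix (JtT N n α) (JtT N n α) ℝ) (algebraMap ℝ ℂ)))
        (fun p q => (F 0) ⟨p.1.1, p.2⟩ ⟨q.1.1, q.2⟩)
        0 (z0 • (1 : Matrix (KtT N n α) (KtT N n α) ℂ)) := by
    have hone : ∀ (p q : JtT N n α), (1 : Matrix (ItT N n) (ItT N n) ℂ) ⟨p.1.1, p.2⟩ ⟨q.1.1, q.2⟩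
        = (1 : Matrix (JtT N n α) (JtT N n α) ℂ) p q := by
      intro p q
      by_cases hpq : p = q
      · subst hpq; simp
      · rw [Matrix.one_apply_ne (fun hc => hpq (inj_J α hc)), Matrix.one_apply_ne hpq]
    have honeK : ∀ (p q : KtT N n α), (1 : Matrix (ItT N n) (ItT N n) ℂ) ⟨p.1.1, p.2⟩ ⟨q.1.1, q.2⟩
        = (1 : Matrix (KtT N n α) (KtT N n α) ℂ) p q := by
      intro p q
      by_cases hpq : p = q
      · subst hpq; simp
      · rw [Matrix.one_apply_ne (fun hc => hpq (inj_K α hc)), Matrix.one_apply_ne hpq]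
    have hF0 : ∀ (a b : ItT N n), F 0 a b
        = z0 * (1 : Matrix (ItT N n) (ItT N n) ℂ) a b - (if a.1 ∈ α then (1:ℂ) else 0) * Ac a b := by
      intro a b
      simp [hF, Matrix.sub_apply, Matrix.smul_apply, Matrix.diagonal_mul]
    ext p q
    rcases p with p | p <;> rcases q with q | q
    · simp only [Matrix.fromBlocks, Matrix.submatrix_apply, Matrix.of_apply, Sum.elim_inl, Sum.elim_inr]
      have hp : (p.1.1 : Fin N) ∈ α := p.1.2
      show F 0 ⟨p.1.1, p.2⟩ ⟨q.1.1, q.2⟩ = _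
      rw [hF0, hone p q]
      simp [hp, hAc, Matrix.sub_apply, Matrix.smul_apply, Matrix.map_apply, Matrix.map]
    · show F 0 ⟨p.1.1, p.2⟩ ⟨q.1.1, q.2⟩ = F 0 ⟨p.1.1, p.2⟩ ⟨q.1.1, q.2⟩
      rfl
    · simp only [Matrix.fromBlocks, Matrix.submatrix_apply, Matrix.of_apply, Sum.elim_inl, Sum.elim_inr]
      have hp : ¬ ((p.1.1 : Fin N) ∈ α) := p.1.2
      have hq : (q.1.1 : Fin N) ∈ α := q.1.2
      have hne : (⟨p.1.1, p.2⟩ : ItT N n) ≠ ⟨q.1.1, q.2⟩ := by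
        intro hc
        rw [Sigma.ext_iff] at hc
        exact hp (by rw [show (p.1.1 : Fin N) = q.1.1 from hc.1]; exact hq)
      show F 0 ⟨p.1.1, p.2⟩ ⟨q.1.1, q.2⟩ = 0
      rw [hF0, Matrix.one_apply_ne hne]
      simp [hp]
    · simp only [Matrix.fromBlocks, Matrix.submatrix_apply, Matrix.of_apply, Sum.elim_inl, Sum.elim_inr]
      have hp : ¬ ((p.1.1 : Fin N) ∈ α) := p.1.2
      show F 0 ⟨p.1.1, p.2⟩ ⟨q.1.1, q.2⟩ = _
      rw [hF0, honeK p q]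
      simp [hp, Matrix.smul_apply]
  have hdet : f 0 = (z0 • (1 : Matrix (JtT N n α) (JtT N n α) ℂ) -
      (Matrix.map (fun p q => A' ⟨p.1.1, p.2⟩ ⟨q.1.1, q.2⟩ :
        Matrix (JtT N n α) (JtT N n α) ℝ) (algebraMap ℝ ℂ))).det
      * (z0 ^ (Fintype.card (KtT N n α))) := by
    show (F 0).det = _
    rw [← Matrix.det_submatrix_equiv_self (splitEquiv α) (F 0), hsub]
    refine (Matrix.det_fromBlocks_zero₂₁ _ _ _).trans ?_
    rw [Matrix.det_smul, Matrix.det_one, mul_one]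
  rw [hdet] at hf0ne
  exact fun hc => hf0ne (by rw [hc, zero_mul])

lemma engineB (α : Finset (Fin N)) (A' : Matrix (ItT N n) (ItT N n) ℝ)
    (h : BlockDStable A')
    (Aαα : Matrix (JtT N n α) (JtT N n α) ℝ)
    (hAαα : Aαα = fun p q => A' ⟨p.1.1, p.2⟩ ⟨q.1.1, q.2⟩)
    (Aαk : Matrix (JtT N n α) (KtT N n α) ℝ)
    (hAαk : Aαk = fun p q => A' ⟨p.1.1, p.2⟩ ⟨q.1.1, q.2⟩)
    (Akα : Matrix (KtT N n α) (JtT N n α) ℝ)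
    (hAkα : Akα = fun p q => A' ⟨p.1.1, p.2⟩ ⟨q.1.1, q.2⟩)
    (Akk : Matrix (KtT N n α) (KtT N n α) ℝ)
    (hAkk : Akk = fun p q => A' ⟨p.1.1, p.2⟩ ⟨q.1.1, q.2⟩)
    (hu : IsUnit Aαα.det)
    (d : {x : Fin N // x ∉ α} → ℝ) (hd : ∀ i, 0 < d i) (z0 : ℂ) (hz : 0 < z0.re) :
    (z0 • (1 : Matrix (KtT N n α) (KtT N n α) ℂ) -
      (Matrix.diagonal (fun p : KtT N n α => d p.1) *
        (Akk - Akα * Aαα⁻¹ * Aαk)).map (algebraMap ℝ ℂ)).det ≠ 0 := by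
  classical
  set Ac := A'.map (algebraMap ℝ ℂ) with hAc
  set D1c : Matrix (ItT N n) (ItT N n) ℂ :=
    Matrix.diagonal (fun p : ItT N n => if hp : p.1 ∈ α then (1:ℂ) else (d ⟨p.1, hp⟩ : ℂ))
    with hD1c
  set F : ℝ → Matrix (ItT N n) (ItT N n) ℂ := fun ε =>
    z0 • Matrix.diagonal (fun p : ItT N n => if p.1 ∈ α then (ε:ℂ) else 1) - D1c * Ac with hF
  set f : ℝ → ℂ := fun ε => (F ε).det with hf
  -- A' has nonzero determinant
  have hdetA' : A'.det ≠ 0 := by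
    have h1 := h (fun _ => (1:ℝ)) (fun i => one_pos)
    rw [show Matrix.diagonal (fun p : ItT N n => (1:ℝ)) = 1 from Matrix.diagonal_one,
      one_mul] at h1
    exact isHurwitz_det_ne_zero A' h1
  have hdetAc : Ac.det ≠ 0 := by
    rw [hAc, show (A'.map ⇑(algebraMap ℝ ℂ)) = (algebraMap ℝ ℂ).mapMatrix A' from rfl,
      ← RingHom.map_det]
    simpa using hdetA'
  -- the constant K0
  set K0 : ℝ := Complex.abs ((D1c * Ac).det) with hK0
  have hK0pos : 0 < K0 := by
    rw [hK0, Matrix.det_mul, _root_.map_mul]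
    apply mul_pos
    · rw [hD1c, Matrix.det_diagonal]
      apply AbsoluteValue.pos
      apply Finset.prod_ne_zero_iff.mpr
      intro p _
      by_cases hp : p.1 ∈ α
      · simp [hp]
      · simp only [hp, dif_neg, not_false_iff]
        exact_mod_cast Complex.ofReal_ne_zero.mpr (ne_of_gt (hd ⟨p.1, hp⟩))
    · exact AbsoluteValue.pos _ hdetAc
  set c : ℝ := min (1/2) (z0.re / (2 * Complex.abs z0)) with hc
  have hzabs : 0 < Complex.abs z0 := Complex.abs.pos (fun h0 => by simp [h0] at hz)
  have hcpos : 0 < c := lt_min (by norm_num) (by positivity)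
  -- lower bound for positive ε
  have hbound : ∀ ε : ℝ, ε ∈ Set.Ioi (0:ℝ) →
      c ^ (Fintype.card (ItT N n)) * K0 ≤ Complex.abs (f ε) := by
    intro ε hε
    rw [Set.mem_Ioi] at hε
    have hεne : (ε:ℂ) ≠ 0 := Complex.ofReal_ne_zero.mpr (ne_of_gt hε)
    set dfull : Fin N → ℝ := fun i => if hi : i ∈ α then ε⁻¹ else d ⟨i, hi⟩ with hdfull
    have hdfpos : ∀ i, 0 < dfull i := by
      intro i
      by_cases hi : i ∈ α
      · simp [hdfull, hi, inv_pos, hε]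
      · simp only [hdfull, hi, dif_neg, not_false_iff]
        exact hd ⟨i, hi⟩
    have hH := h dfull hdfpos
    set Mc : Matrix (ItT N n) (ItT N n) ℂ :=
      (Matrix.diagonal (fun p : ItT N n => dfull p.1) * A').map (algebraMap ℝ ℂ) with hMc
    have hMc' : Mc = Matrix.diagonal (fun p : ItT N n => ((dfull p.1 : ℝ) : ℂ)) * Ac := by
      rw [hMc, Matrix.map_mul]
      congr 1
      rw [Matrix.diagonal_map (map_zero _)]
      rfl
    set Dε : Matrix (ItT N n) (ItT N n) ℂ :=
      Matrix.diagonal (fun p : ItT N n => if p.1 ∈ α then (ε:ℂ) else 1) with hDε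
    have hfun : (fun i : ItT N n => (if i.1 ∈ α then (ε:ℂ) else 1) * ((dfull i.1 : ℝ) : ℂ))
        = (fun p : ItT N n => if hp : p.1 ∈ α then (1:ℂ) else (d ⟨p.1, hp⟩ : ℂ)) := by
      funext p
      by_cases hp : p.1 ∈ α
      · simp only [hdfull, hp, if_true, dif_pos]
        rw [Complex.ofReal_inv]
        exact mul_inv_cancel₀ hεne
      · simp [hdfull, hp]
    have hDεMc : Dε * Mc = D1c * Ac := by
      rw [hMc', hDε, ← Matrix.mul_assoc, Matrix.diagonal_mul_diagonal, hfun, hD1c]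
    have hfact : F ε = Dε * (z0 • 1 - Mc) := by
      simp only [hF]
      rw [Matrix.mul_sub, hDεMc, Matrix.mul_smul, Matrix.mul_one, hDε]
    have hspec : ∀ w ∈ spectrum ℂ Mc, w.re < 0 := hH
    have hb := bound_det Mc hspec z0 hz
    calc c ^ (Fintype.card (ItT N n)) * K0
        = Complex.abs Dε.det * (c ^ (Fintype.card (ItT N n)) * Complex.abs Mc.det) := by
          rw [hK0, ← hDεMc, Matrix.det_mul, _root_.map_mul]
          ring
      _ ≤ Complex.abs Dε.det * Complex.abs ((z0 • 1 - Mc).det) := by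
          apply mul_le_mul_of_nonneg_left _ (AbsoluteValue.nonneg _ _)
          exact hb
      _ = Complex.abs (f ε) := by
          rw [hf]
          simp only [hfact, Matrix.det_mul, _root_.map_mul]
  -- continuity and limit
  have hdiag : Continuous (fun ε : ℝ =>
      Matrix.diagonal (fun p : ItT N n => if p.1 ∈ α then (ε:ℂ) else 1)) := by
    apply Continuous.matrix_diagonal
    apply continuous_pi
    intro p
    by_cases hp : p.1 ∈ α
    · simpa [hp] using Complex.continuous_ofReal
    · simpa [hp] using (continuous_const : Continuous fun _ : ℝ => (1:ℂ))
  have hcont : Continuous f :=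
    Continuous.matrix_det (Continuous.sub (hdiag.const_smul z0) continuous_const)
  have htend : Filter.Tendsto f (nhdsWithin 0 (Set.Ioi 0)) (nhds (f 0)) :=
    (hcont.tendsto 0).mono_left nhdsWithin_le_nhds
  have habs : c ^ (Fintype.card (ItT N n)) * K0 ≤ Complex.abs (f 0) :=
    ge_of_tendsto ((Complex.continuous_abs.tendsto _).comp htend)
      (Filter.eventually_of_mem self_mem_nhdsWithin hbound)
  have hf0ne : f 0 ≠ 0 := by
    intro h0
    rw [h0] at habs
    simp only [map_zero] at habs
    exact absurd habs (not_le.mpr (by positivity))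
  -- compute f 0 via blocks
  set Aααc : Matrix (JtT N n α) (JtT N n α) ℂ := Aαα.map (algebraMap ℝ ℂ) with hAααc
  set Aαkc : Matrix (JtT N n α) (KtT N n α) ℂ := Aαk.map (algebraMap ℝ ℂ) with hAαkc
  set Akαc : Matrix (KtT N n α) (JtT N n α) ℂ := Akα.map (algebraMap ℝ ℂ) with hAkαc
  set Akkc : Matrix (KtT N n α) (KtT N n α) ℂ := Akk.map (algebraMap ℝ ℂ) with hAkkc
  set Dkc : Matrix (KtT N n α) (KtT N n α) ℂ :=
    Matrix.diagonal (fun p : KtT N n α => (d p.1 : ℂ)) with hDkc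
  have hF0 : ∀ (a b : ItT N n), F 0 a b
      = z0 * (if a = b then (if a.1 ∈ α then (0:ℂ) else 1) else 0)
        - (if ha : a.1 ∈ α then (1:ℂ) else (d ⟨a.1, ha⟩ : ℂ)) * Ac a b := by
    intro a b
    simp [hF, hD1c, Matrix.sub_apply, Matrix.smul_apply, Matrix.diagonal_apply,
      Matrix.diagonal_mul]
  have hsub : (F 0).submatrix (splitEquiv α) (splitEquiv α) =
      Matrix.fromBlocks (-Aααc) (-Aαkc) (-(Dkc * Akαc)) (z0 • 1 - Dkc * Akkc) := by
    ext p q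
    rcases p with p | p <;> rcases q with q | q
    · rw [Matrix.submatrix_apply, Matrix.fromBlocks_apply₁₁]
      have hp : (p.1.1 : Fin N) ∈ α := p.1.2
      show F 0 ⟨p.1.1, p.2⟩ ⟨q.1.1, q.2⟩ = _
      rw [hF0]
      simp [hp, hAααc, hAαα, hAc, Matrix.map_apply, Matrix.map, Matrix.neg_apply]
    · rw [Matrix.submatrix_apply, Matrix.fromBlocks_apply₁₂]
      have hp : (p.1.1 : Fin N) ∈ α := p.1.2
      show F 0 ⟨p.1.1, p.2⟩ ⟨q.1.1, q.2⟩ = _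
      rw [hF0]
      simp [hp, hAαkc, hAαk, hAc, Matrix.map_apply, Matrix.map, Matrix.neg_apply]
    · rw [Matrix.submatrix_apply, Matrix.fromBlocks_apply₂₁]
      have hp : ¬ ((p.1.1 : Fin N) ∈ α) := p.1.2
      have hq : (q.1.1 : Fin N) ∈ α := q.1.2
      have hne : (⟨p.1.1, p.2⟩ : ItT N n) ≠ ⟨q.1.1, q.2⟩ := by
        intro hc
        rw [Sigma.ext_iff] at hc
        exact hp (by rw [show (p.1.1 : Fin N) = q.1.1 from hc.1]; exact hq)
      show F 0 ⟨p.1.1, p.2⟩ ⟨q.1.1, q.2⟩ = _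
      rw [hF0]
      simp [hp, hne, hDkc, hAkαc, hAkα, hAc, Matrix.map_apply, Matrix.map, Matrix.neg_apply,
        Matrix.diagonal_mul]
    · rw [Matrix.submatrix_apply, Matrix.fromBlocks_apply₂₂]
      have hp : ¬ ((p.1.1 : Fin N) ∈ α) := p.1.2
      show F 0 ⟨p.1.1, p.2⟩ ⟨q.1.1, q.2⟩ = _
      rw [hF0]
      have hiff : ((⟨p.1.1, p.2⟩ : ItT N n) = ⟨q.1.1, q.2⟩) ↔ p = q :=
        ⟨fun hc => inj_K α hc, fun hc => by rw [hc]⟩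
      by_cases hpq : p = q
      · subst hpq
        simp [hp, hDkc, hAkkc, hAkk, hAc, Matrix.map_apply, Matrix.map, Matrix.sub_apply,
          Matrix.smul_apply, Matrix.one_apply_eq, Matrix.diagonal_mul]
      · have hne : (⟨p.1.1, p.2⟩ : ItT N n) ≠ ⟨q.1.1, q.2⟩ := fun hc => hpq (hiff.mp hc)
        simp [hp, hne, hpq, hDkc, hAkkc, hAkk, hAc, Matrix.map_apply, Matrix.map, Matrix.sub_apply,
          Matrix.smul_apply, Matrix.one_apply_ne, Matrix.diagonal_mul]
  -- invertibility of the complexified corner block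
  have hdetAααc : IsUnit Aααc.det := by
    rw [hAααc, show Aαα.map ⇑(algebraMap ℝ ℂ) = (algebraMap ℝ ℂ).mapMatrix Aαα from rfl,
      ← RingHom.map_det]
    exact hu.map (algebraMap ℝ ℂ)
  have hinv : Invertible Aααc := Matrix.invertibleOfIsUnitDet _ hdetAααc
  haveI := hinv
  haveI : Invertible (-Aααc) := invertibleNeg _
  -- the complexification of the inverse
  have hinvmap : Aααc⁻¹ = (Aαα⁻¹).map (algebraMap ℝ ℂ) := by
    apply Matrix.inv_eq_left_inv
    rw [hAααc, ← Matrix.map_mul, Matrix.nonsing_inv_mul _ hu, Matrix.map_one _ (map_zero _) (map_one _)]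
  have hmapS : (Matrix.diagonal (fun p : KtT N n α => d p.1) *
      (Akk - Akα * Aαα⁻¹ * Aαk)).map (algebraMap ℝ ℂ)
      = Dkc * (Akkc - Akαc * Aααc⁻¹ * Aαkc) := by
    rw [Matrix.map_mul, hinvmap]
    congr 1
    · rw [Matrix.diagonal_map (map_zero _), hDkc]
      rfl
    · ext p q
      simp [hAkkc, hAkαc, hAαkc, Matrix.map_apply, Matrix.sub_apply, Matrix.mul_apply,
        Finset.mul_sum]
  have hschur : (z0 • 1 - Dkc * Akkc) - (-(Dkc * Akαc)) * ⅟(-Aααc) * (-Aαkc)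
      = z0 • (1 : Matrix (KtT N n α) (KtT N n α) ℂ)
        - Dkc * (Akkc - Akαc * Aααc⁻¹ * Aαkc) := by
    rw [invOf_neg, invOf_eq_nonsing_inv]
    simp only [Matrix.neg_mul, Matrix.mul_neg, neg_neg, Matrix.mul_sub, Matrix.mul_assoc]
    abel
  have hdet0 : f 0 = (-Aααc).det *
      (z0 • (1 : Matrix (KtT N n α) (KtT N n α) ℂ) -
        (Matrix.diagonal (fun p : KtT N n α => d p.1) *
          (Akk - Akα * Aαα⁻¹ * Aαk)).map (algebraMap ℝ ℂ)).det := by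
    show (F 0).det = _
    rw [← Matrix.det_submatrix_equiv_self (splitEquiv α) (F 0), hsub,
      Matrix.det_fromBlocks₁₁, hschur, hmapS]
  intro h0
  exact hf0ne (hdet0.trans (by rw [h0, mul_zero]))

def embedK (α : Finset (Fin N)) (C : Matrix (KtT N n α) (KtT N n α) ℝ) :
    Matrix (ItT N n) (ItT N n) ℝ :=
  fun p q => if hp : p.1 ∈ α then 0 else if hq : q.1 ∈ α then 0 else
    C ⟨⟨p.1, hp⟩, p.2⟩ ⟨⟨q.1, hq⟩, q.2⟩

def embedJ (α : Finset (Fin N)) (C : Matrix (JtT N n α) (JtT N n α) ℝ) :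
    Matrix (ItT N n) (ItT N n) ℝ :=
  fun p q => if hp : p.1 ∈ α then (if hq : q.1 ∈ α then
    C ⟨⟨p.1, hp⟩, p.2⟩ ⟨⟨q.1, hq⟩, q.2⟩ else 0) else 0

lemma opNorm2_nonneg {m : Type*} [Fintype m] [DecidableEq m] (M : Matrix m m ℝ) :
    0 ≤ opNorm2 M := norm_nonneg _

lemma opNorm2_le_of_entries {m : Type*} [Fintype m] [DecidableEq m]
    (M : Matrix m m ℝ) (b : ℝ) (hb : 0 ≤ b) (h : ∀ p q, |M p q| ≤ b) :
    opNorm2 M ≤ (Fintype.card m)^2 * b := by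
  calc opNorm2 M ≤ ∑ i, ∑ j, |M i j| := opNorm2_le_sum_abs M
    _ ≤ ∑ _i : m, ∑ _j : m, b :=
        Finset.sum_le_sum fun i _ => Finset.sum_le_sum fun j _ => h i j
    _ = (Fintype.card m)^2 * b := by
        simp [Finset.sum_const, Finset.card_univ, mul_assoc, sq, mul_comm, nsmul_eq_mul]
        ring

lemma opNorm2_embedK_le (α : Finset (Fin N)) (C : Matrix (KtT N n α) (KtT N n α) ℝ) :
    opNorm2 (embedK α C) ≤ (Fintype.card (ItT N n))^2 * opNorm2 C := by
  apply opNorm2_le_of_entries _ _ (opNorm2_nonneg C)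
  intro p q
  by_cases hp : p.1 ∈ α
  · simp [embedK, hp, opNorm2_nonneg C]
  · by_cases hq : q.1 ∈ α
    · simp [embedK, hp, hq, opNorm2_nonneg C]
    · simpa [embedK, hp, hq] using entry_le_opNorm2 C ⟨⟨p.1, hp⟩, p.2⟩ ⟨⟨q.1, hq⟩, q.2⟩

lemma opNorm2_embedJ_le (α : Finset (Fin N)) (C : Matrix (JtT N n α) (JtT N n α) ℝ) :
    opNorm2 (embedJ α C) ≤ (Fintype.card (ItT N n))^2 * opNorm2 C := by
  apply opNorm2_le_of_entries _ _ (opNorm2_nonneg C)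
  intro p q
  by_cases hp : p.1 ∈ α
  · by_cases hq : q.1 ∈ α
    · simpa [embedJ, hp, hq] using entry_le_opNorm2 C ⟨⟨p.1, hp⟩, p.2⟩ ⟨⟨q.1, hq⟩, q.2⟩
    · simp [embedJ, hp, hq, opNorm2_nonneg C]
  · simp [embedJ, hp, opNorm2_nonneg C]

set_option synthInstance.maxHeartbeats 1000000 in
lemma opNorm2_add_le {m : Type*} [Fintype m] [DecidableEq m] (X Y : Matrix m m ℝ) :
    opNorm2 (X + Y) ≤ opNorm2 X + opNorm2 Y := by
  unfold opNorm2
  rw [_root_.map_add]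
  exact norm_add_le _ _

set_option synthInstance.maxHeartbeats 1000000 in
lemma opNorm2_smul {m : Type*} [Fintype m] [DecidableEq m] (t : ℝ) (X : Matrix m m ℝ) :
    opNorm2 (t • X) ≤ |t| * opNorm2 X := by
  unfold opNorm2
  rw [_root_.map_smul]
  simpa [Real.norm_eq_abs] using
    ContinuousLinearMap.opNorm_smul_le t (toEuclideanCLM (𝕜 := ℝ) X)

lemma spectrum_shift {m : Type*} [Fintype m] [DecidableEq m] (M : Matrix m m ℂ)
    (z t : ℂ) (h : z ∈ spectrum ℂ M) : z + t ∈ spectrum ℂ (M + t • 1) := by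
  rw [mem_spectrum_iff_det'] at h ⊢
  rw [show (z + t) • (1 : Matrix m m ℂ) - (M + t • 1) = z • 1 - M by
    rw [add_smul]; abel]
  exact h

lemma map_add_smul_one {m : Type*} [Fintype m] [DecidableEq m]
    (X : Matrix m m ℝ) (t : ℝ) :
    (X + t • 1).map (algebraMap ℝ ℂ) = X.map (algebraMap ℝ ℂ) + (t : ℂ) • 1 := by
  ext p q
  by_cases hpq : p = q
  · subst hpq
    simp [Matrix.map_apply, Matrix.add_apply, Matrix.smul_apply, Matrix.one_apply_eq]
  · simp [Matrix.map_apply, Matrix.add_apply, Matrix.smul_apply, Matrix.one_apply_ne hpq]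

set_option maxHeartbeats 2000000 in
lemma main_aux (α : Finset (Fin N)) (A : Matrix (ItT N n) (ItT N n) ℝ)
    (hA : RobustBlockDStable A)
    (Aαα : Matrix (JtT N n α) (JtT N n α) ℝ)
    (hAαα : Aαα = fun p q => A ⟨p.1.1, p.2⟩ ⟨q.1.1, q.2⟩)
    (Aαk : Matrix (JtT N n α) (KtT N n α) ℝ)
    (hAαk : Aαk = fun p q => A ⟨p.1.1, p.2⟩ ⟨q.1.1, q.2⟩)
    (Akα : Matrix (KtT N n α) (JtT N n α) ℝ)
    (hAkα : Akα = fun p q => A ⟨p.1.1, p.2⟩ ⟨q.1.1, q.2⟩)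
    (Akk : Matrix (KtT N n α) (KtT N n α) ℝ)
    (hAkk : Akk = fun p q => A ⟨p.1.1, p.2⟩ ⟨q.1.1, q.2⟩) :
    IsUnit Aαα ∧ RobustBlockDStable (Akk - Akα * Aαα⁻¹ * Aαk) := by
  classical
  obtain ⟨μ, hμ, hrob⟩ := hA
  set cI : ℝ := ((Fintype.card (ItT N n) : ℝ))^2 with hcI
  have hcI0 : (0:ℝ) ≤ cI := by positivity
  set μ' : ℝ := μ / (cI + 1) with hμ'
  have hμ'pos : 0 < μ' := by positivity
  have hcard : ∀ q : ℝ, 0 ≤ q → q ≤ μ' → cI * q ≤ μ := by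
    intro q hq0 hq
    calc cI * q ≤ cI * μ' := mul_le_mul_of_nonneg_left hq hcI0
      _ ≤ cI * μ' + μ' := le_add_of_nonneg_right hμ'pos.le
      _ = μ := by
          rw [hμ']
          field_simp
  -- Part 1 : the determinant of the corner block is nonzero
  have hdetAαα : Aαα.det ≠ 0 := by
    intro hdet
    set B := embedJ α (μ' • (1 : Matrix (JtT N n α) (JtT N n α) ℝ)) with hB
    have hone : opNorm2 (1 : Matrix (JtT N n α) (JtT N n α) ℝ) ≤ 1 := by
      unfold opNorm2
      rw [_root_.map_one]
      exact ContinuousLinearMap.norm_id_le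
    have hBnorm : opNorm2 B ≤ μ := by
      refine (opNorm2_embedJ_le α _).trans ?_
      apply hcard _ (opNorm2_nonneg _)
      refine (opNorm2_smul μ' 1).trans ?_
      rw [abs_of_pos hμ'pos]
      nlinarith [hμ'pos.le]
    have hstable := hrob B hBnorm
    have hget := engineA α (A + B) hstable (μ' : ℂ) (by simpa using hμ'pos)
    apply hget
    have hblock : Aαα + μ' • 1 = (fun p q => (A + B) ⟨p.1.1, p.2⟩ ⟨q.1.1, q.2⟩ :
        Matrix (JtT N n α) (JtT N n α) ℝ) := by
      funext p q
      have hp : (p.1.1 : Fin N) ∈ α := p.1.2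
      have hq : (q.1.1 : Fin N) ∈ α := q.1.2
      simp [hB, embedJ, hp, hq, Matrix.add_apply, Matrix.smul_apply, hAαα]
      rfl
    rw [← hblock, map_add_smul_one]
    rw [show ((μ' : ℝ) : ℂ) • (1 : Matrix (JtT N n α) (JtT N n α) ℂ) -
        (Aαα.map (algebraMap ℝ ℂ) + ((μ' : ℝ) : ℂ) • 1) = -(Aαα.map (algebraMap ℝ ℂ)) from by
      abel]
    rw [Matrix.det_neg,
      show Aαα.map ⇑(algebraMap ℝ ℂ) = (algebraMap ℝ ℂ).mapMatrix Aαα from rfl,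
      ← RingHom.map_det, hdet]
    simp
  have hUnitDet : IsUnit Aαα.det := isUnit_iff_ne_zero.mpr hdetAαα
  refine ⟨(Matrix.isUnit_iff_isUnit_det Aαα).mpr hUnitDet, ?_⟩
  -- Part 2 : robust block D-stability of the Schur complement
  refine ⟨μ'/2, by positivity, ?_⟩
  intro C' hC' d hd
  intro z hz
  by_contra hge
  rw [not_lt] at hge
  set Dinv : Matrix (KtT N n α) (KtT N n α) ℝ :=
    Matrix.diagonal (fun p : KtT N n α => (d p.1)⁻¹) with hDinv
  set Sd : ℝ := ∑ i, ∑ j, |Dinv i j| with hSd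
  have hSd0 : 0 ≤ Sd :=
    Finset.sum_nonneg fun i _ => Finset.sum_nonneg fun j _ => abs_nonneg _
  set t : ℝ := (μ'/2) / (Sd + 1) with ht
  have htpos : 0 < t := by positivity
  set C : Matrix (KtT N n α) (KtT N n α) ℝ := C' + t • Dinv with hC
  have hCnorm : opNorm2 C ≤ μ' := by
    have h1 : opNorm2 (t • Dinv) ≤ t * Sd := by
      refine (opNorm2_smul t Dinv).trans ?_
      rw [abs_of_pos htpos]
      exact mul_le_mul_of_nonneg_left (opNorm2_le_sum_abs Dinv) htpos.le
    have h2 : t * (Sd + 1) = μ'/2 := by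
      rw [ht]
      field_simp
    calc opNorm2 C ≤ opNorm2 C' + opNorm2 (t • Dinv) := opNorm2_add_le _ _
      _ ≤ μ'/2 + t * Sd := add_le_add hC' h1
      _ ≤ μ' := by nlinarith [htpos.le]
  have hstable := hrob (embedK α C) (by
    refine (opNorm2_embedK_le α C).trans ?_
    exact hcard _ (opNorm2_nonneg _) hCnorm)
  -- block identities for the perturbed matrix
  have hblockαα : Aαα = fun p q => (A + embedK α C) ⟨p.1.1, p.2⟩ ⟨q.1.1, q.2⟩ := by
    rw [hAαα]
    funext p q
    simp [embedK, Matrix.add_apply, p.1.2]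
  have hblockαk : Aαk = fun p q => (A + embedK α C) ⟨p.1.1, p.2⟩ ⟨q.1.1, q.2⟩ := by
    rw [hAαk]
    funext p q
    simp [embedK, Matrix.add_apply, p.1.2]
  have hblockkα : Akα = fun p q => (A + embedK α C) ⟨p.1.1, p.2⟩ ⟨q.1.1, q.2⟩ := by
    rw [hAkα]
    funext p q
    simp [embedK, Matrix.add_apply, p.1.2, q.1.2]
  have hblockkk : Akk + C = fun p q => (A + embedK α C) ⟨p.1.1, p.2⟩ ⟨q.1.1, q.2⟩ := by
    rw [hAkk]
    funext p q
    simp [embedK, Matrix.add_apply, p.1.2, q.1.2]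
    rfl
  have hengine := engineB α (A + embedK α C) hstable Aαα hblockαα Aαk hblockαk
    Akα hblockkα (Akk + C) hblockkk hUnitDet d hd (z + (t : ℂ))
    (by simp only [Complex.add_re, Complex.ofReal_re]; linarith)
  apply hengine
  have hrearr : (Akk + C) - Akα * Aαα⁻¹ * Aαk
      = ((Akk - Akα * Aαα⁻¹ * Aαk) + C') + t • Dinv := by
    rw [hC]; abel
  rw [hrearr]
  have hsplit : Matrix.diagonal (fun p : KtT N n α => d p.1) *
      (((Akk - Akα * Aαα⁻¹ * Aαk) + C') + t • Dinv)
      = Matrix.diagonal (fun p : KtT N n α => d p.1) *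
        ((Akk - Akα * Aαα⁻¹ * Aαk) + C') + t • 1 := by
    rw [Matrix.mul_add, Matrix.mul_smul, hDinv, Matrix.diagonal_mul_diagonal]
    congr 2
    rw [show (fun p : KtT N n α => d p.1 * (d p.1)⁻¹) = fun _ => (1:ℝ) from
      funext fun p => mul_inv_cancel₀ (hd p.1).ne', Matrix.diagonal_one]
  rw [hsplit, map_add_smul_one]
  have hzt := spectrum_shift _ z ((t : ℝ) : ℂ) hz
  rw [mem_spectrum_iff_det'] at hzt
  exact hzt

theorem robust_block_D_stable_schur_complement
    (N : ℕ) (hN : 0 < N) (n : Fin N → ℕ) (hn : ∀ i, 0 < n i)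
    (A : Matrix ((i : Fin N) × Fin (n i)) ((i : Fin N) × Fin (n i)) ℝ)
    (hA : RobustBlockDStable A)
    (α : Finset (Fin N)) (hne : α.Nonempty) (hproper : α ≠ Finset.univ) :
    -- the block principal submatrices of `A`
    letI Aαα : Matrix ((i : {x : Fin N // x ∈ α}) × Fin (n i.1))
        ((i : {x : Fin N // x ∈ α}) × Fin (n i.1)) ℝ :=
      fun p q => A ⟨p.1.1, p.2⟩ ⟨q.1.1, q.2⟩
    letI Aᾱα : Matrix ((i : {x : Fin N // x ∉ α}) × Fin (n i.1))
        ((i : {x : Fin N // x ∈ α}) × Fin (n i.1)) ℝ :=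
      fun p q => A ⟨p.1.1, p.2⟩ ⟨q.1.1, q.2⟩
    letI Aαᾱ : Matrix ((i : {x : Fin N // x ∈ α}) × Fin (n i.1))
        ((i : {x : Fin N // x ∉ α}) × Fin (n i.1)) ℝ :=
      fun p q => A ⟨p.1.1, p.2⟩ ⟨q.1.1, q.2⟩
    letI Aᾱᾱ : Matrix ((i : {x : Fin N // x ∉ α}) × Fin (n i.1))
        ((i : {x : Fin N // x ∉ α}) × Fin (n i.1)) ℝ :=
      fun p q => A ⟨p.1.1, p.2⟩ ⟨q.1.1, q.2⟩
    IsUnit Aαα ∧ RobustBlockDStable (Aᾱᾱ - Aᾱα * Aαα⁻¹ * Aαᾱ) := by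
  exact main_aux α A hA _ rfl _ rfl _ rfl _ rfl
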